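/- Let n ≥ 4 and let α, β ∈ K satisfy α ≠ β and α ≠ −β. If T : Mat_n(K) → Mat_n(K) is a bijective K-linear map that stabilizes det^{(α,β)}, then for every pair of indices (i,j), the matrix T(E_{ij}) has exactly one nonzero entry, where E_{ij} denotes the matrix unit with 1 in position (i,j) and 0 elsewhere. -/

import Mathlib

open Matrix Finset

noncomputable def evenDet {K : Type*} [Field K] {n : ℕ} (A : Matrix (Fin n) (Fin n) K) : K :=
  ∑ σ ∈ Finset.univ.filter (fun σ : Equiv.Perm (Fin n) => Equiv.Perm.sign σ = 1),
    ∏ i, A i (σ i)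

noncomputable def oddDet {K : Type*} [Field K] {n : ℕ} (A : Matrix (Fin n) (Fin n) K) : K :=
  ∑ σ ∈ Finset.univ.filter (fun σ : Equiv.Perm (Fin n) => Equiv.Perm.sign σ = -1),
    ∏ i, A i (σ i)

/-- The generalized determinant `det^{(α,β)}`. -/
noncomputable def gdet {K : Type*} [Field K] {n : ℕ} (α β : K) (A : Matrix (Fin n) (Fin n) K) : K :=
  α * evenDet A + β * oddDet A

/-- The permutation matrix `P = (δ_{i, σ(j)})`. -/
def permMat (K : Type*) [Field K] {n : ℕ} (σ : Equiv.Perm (Fin n)) : Matrix (Fin n) (Fin n) K :=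
  fun i j => if i = σ j then 1 else 0

section AuxPoly

open Polynomial

variable {K : Type*} [Field K] {n : ℕ}

/-- A matrix is supported in a single row or a single column. -/
def lineSupp (C : Matrix (Fin n) (Fin n) K) : Prop :=
  (∃ i, ∀ t m, C t m ≠ 0 → t = i) ∨ (∃ j, ∀ t m, C t m ≠ 0 → m = j)

/-- polynomial whose evaluation at `x` is `gdet α β (x • D + B)` -/
noncomputable def gpoly (α β : K) (D B : Matrix (Fin n) (Fin n) K) : Polynomial K :=
  Polynomial.C α * ∑ σ ∈ Finset.univ.filter (fun σ : Equiv.Perm (Fin n) => Equiv.Perm.sign σ = 1),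
      ∏ t, (Polynomial.X * Polynomial.C (D t (σ t)) + Polynomial.C (B t (σ t)))
  + Polynomial.C β * ∑ σ ∈ Finset.univ.filter (fun σ : Equiv.Perm (Fin n) => Equiv.Perm.sign σ = -1),
      ∏ t, (Polynomial.X * Polynomial.C (D t (σ t)) + Polynomial.C (B t (σ t)))

lemma gpoly_eval (α β : K) (D B : Matrix (Fin n) (Fin n) K) (x : K) :
    (gpoly α β D B).eval x = gdet α β (x • D + B) := by
  have hc : ∀ σ : Equiv.Perm (Fin n), ∏ t, (D t (σ t) * x + B t (σ t))
      = ∏ t, (x * D t (σ t) + B t (σ t)) :=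
    fun σ => Finset.prod_congr rfl (fun t _ => by ring)
  simp [gpoly, gdet, evenDet, oddDet, Polynomial.eval_finset_sum, Polynomial.eval_prod,
    Matrix.add_apply, Matrix.smul_apply, smul_eq_mul, hc]

/-- if `D` is supported in a single row or a single column, `gpoly` has degree ≤ 1 -/
lemma gpoly_natDegree_le (α β : K) (D B : Matrix (Fin n) (Fin n) K) (hD : lineSupp D) :
    (gpoly α β D B).natDegree ≤ 1 := by
  classical
  have key : ∀ σ : Equiv.Perm (Fin n),
      (∏ t, (Polynomial.X * Polynomial.C (D t (σ t)) + Polynomial.C (B t (σ t)))).natDegree ≤ 1 := by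
    intro σ
    refine le_trans (Polynomial.natDegree_prod_le _ _) ?_
    have hb : ∀ t : Fin n,
        (Polynomial.X * Polynomial.C (D t (σ t)) + Polynomial.C (B t (σ t))).natDegree
          ≤ if D t (σ t) = 0 then 0 else 1 := by
      intro t
      by_cases h : D t (σ t) = 0
      · simp [h]
      · simp only [h, if_false]
        refine le_trans (Polynomial.natDegree_add_le _ _) ?_
        simp [Polynomial.natDegree_C]
        refine le_trans (Polynomial.natDegree_mul_le) ?_
        simp
    refine le_trans (Finset.sum_le_sum fun t _ => hb t) ?_
    have hsub : ∀ t s : Fin n, D t (σ t) ≠ 0 → D s (σ s) ≠ 0 → t = s := by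
      rcases hD with ⟨i, hi⟩ | ⟨j, hj⟩
      · intro t s ht hs; rw [hi t _ ht, hi s _ hs]
      · intro t s ht hs
        have := hj t _ ht; have h2 := hj s _ hs
        have : σ t = σ s := by rw [this, h2]
        exact σ.injective this
    by_cases hex : ∃ t, D t (σ t) ≠ 0
    · obtain ⟨t0, ht0⟩ := hex
      calc ∑ t, (if D t (σ t) = 0 then 0 else 1)
          ≤ ∑ t, (if t = t0 then 1 else 0) := by
            refine Finset.sum_le_sum fun t _ => ?_
            by_cases h : D t (σ t) = 0
            · simp [h]
            · rw [if_neg h, if_pos (hsub t t0 h ht0)]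
        _ = 1 := by simp
    · push_neg at hex
      simp [hex]
  have h1 : ∀ (s : Finset (Equiv.Perm (Fin n))),
      (∑ σ ∈ s, ∏ t, (Polynomial.X * Polynomial.C (D t (σ t)) + Polynomial.C (B t (σ t)))).natDegree ≤ 1 :=
    fun s => le_trans (Polynomial.natDegree_sum_le_of_forall_le _ _ (fun σ _ => key σ)) (by simp)
  refine le_trans (Polynomial.natDegree_add_le _ _) ?_
  simp only [sup_le_iff]
  constructor <;>
    exact le_trans Polynomial.natDegree_mul_le (by simpa using h1 _)

lemma perm_eq_of_fixes {p q : Fin n} (hpq : p ≠ q) (ρ : Equiv.Perm (Fin n))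
    (hfix : ∀ t, t ≠ p → t ≠ q → ρ t = t) : ρ = 1 ∨ ρ = Equiv.swap p q := by
  have hp : ρ p = p ∨ ρ p = q := by
    by_contra h
    push_neg at h
    have := hfix (ρ p) h.1 h.2
    exact h.1 (ρ.injective this)
  have hq : ρ q = p ∨ ρ q = q := by
    by_contra h
    push_neg at h
    have := hfix (ρ q) h.1 h.2
    exact h.2 (ρ.injective this)
  rcases hp with hp | hp
  · rcases hq with hq | hq
    · exact absurd (ρ.injective (hq.trans hp.symm)) (Ne.symm hpq)
    · left
      ext t
      by_cases h1 : t = p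
      · simp [h1, hp]
      · by_cases h2 : t = q
        · simp [h2, hq]
        · simp [hfix t h1 h2]
  · rcases hq with hq | hq
    · right
      ext t
      by_cases h1 : t = p
      · simp [h1, hp, Equiv.swap_apply_left]
      · by_cases h2 : t = q
        · simp [h2, hq, Equiv.swap_apply_right]
        · simp [hfix t h1 h2, Equiv.swap_apply_of_ne_of_ne h1 h2]
    · exact absurd (ρ.injective (hp.trans hq.symm)) hpq

lemma gpoly_coeff_two (α β : K) (D : Matrix (Fin n) (Fin n) K)
    {p q : Fin n} (hpq : p ≠ q) (σ0 : Equiv.Perm (Fin n)) :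
    (gpoly α β D (Matrix.of fun t m => if t ≠ p ∧ t ≠ q ∧ m = σ0 t then (1:K) else 0)).coeff 2
      = α * ((if Equiv.Perm.sign σ0 = 1 then D p (σ0 p) * D q (σ0 q) else 0)
            + (if Equiv.Perm.sign σ0 = -1 then D p (σ0 q) * D q (σ0 p) else 0))
      + β * ((if Equiv.Perm.sign σ0 = -1 then D p (σ0 p) * D q (σ0 q) else 0)
            + (if Equiv.Perm.sign σ0 = 1 then D p (σ0 q) * D q (σ0 p) else 0)) := by
  classical
  set B : Matrix (Fin n) (Fin n) K :=
    Matrix.of fun t m => if t ≠ p ∧ t ≠ q ∧ m = σ0 t then (1:K) else 0 with hB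
  set τ : Equiv.Perm (Fin n) := σ0 * Equiv.swap p q with hτ
  have hτp : τ p = σ0 q := by simp [hτ, Equiv.Perm.mul_apply, Equiv.swap_apply_left]
  have hτq : τ q = σ0 p := by simp [hτ, Equiv.Perm.mul_apply, Equiv.swap_apply_right]
  have hστ : σ0 ≠ τ := by
    intro h
    have h1 : σ0 p = σ0 q := by
      calc σ0 p = τ p := by rw [h]
        _ = σ0 q := hτp
    exact hpq (σ0.injective h1)
  have hsτ : Equiv.Perm.sign τ = -Equiv.Perm.sign σ0 := by
    simp [hτ, Equiv.Perm.sign_swap hpq, mul_comm]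
  have hc : ∀ σ : Equiv.Perm (Fin n),
      (∏ t, (Polynomial.X * Polynomial.C (D t (σ t)) + Polynomial.C (B t (σ t)))).coeff 2
        = (if σ = σ0 then D p (σ0 p) * D q (σ0 q) else 0)
          + (if σ = τ then D p (σ0 q) * D q (σ0 p) else 0) := by
    intro σ
    have hqmem : q ∈ Finset.univ.erase p :=
      Finset.mem_erase.mpr ⟨Ne.symm hpq, Finset.mem_univ q⟩
    rw [← Finset.mul_prod_erase Finset.univ _ (Finset.mem_univ p),
        ← Finset.mul_prod_erase _ _ hqmem]
    have hBp : B p (σ p) = 0 := by simp [hB]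
    have hBq : B q (σ q) = 0 := by simp [hB]
    rw [hBp, hBq]
    set g : Polynomial K :=
      ∏ t ∈ (Finset.univ.erase p).erase q,
        (Polynomial.X * Polynomial.C (D t (σ t)) + Polynomial.C (B t (σ t))) with hg
    have hrw : (Polynomial.X * Polynomial.C (D p (σ p)) + Polynomial.C 0)
        * ((Polynomial.X * Polynomial.C (D q (σ q)) + Polynomial.C 0) * g)
        = Polynomial.X ^ 2 * (Polynomial.C (D p (σ p) * D q (σ q)) * g) := by
      rw [Polynomial.C_mul, Polynomial.C_0]
      ring
    rw [hrw]
    rw [show (2:ℕ) = 0 + 2 from rfl, Polynomial.coeff_X_pow_mul,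
      Polynomial.coeff_C_mul, Polynomial.coeff_zero_eq_eval_zero, hg,
      Polynomial.eval_prod]
    have hev : ∀ t ∈ (Finset.univ.erase p).erase q,
        Polynomial.eval 0 (Polynomial.X * Polynomial.C (D t (σ t)) + Polynomial.C (B t (σ t)))
          = if σ t = σ0 t then (1:K) else 0 := by
      intro t ht
      simp only [Finset.mem_erase] at ht
      by_cases hst : σ t = σ0 t <;> simp [hB, ht.1, ht.2.1, hst]
    rw [Finset.prod_congr rfl hev, Finset.prod_boole]
    have hiff : (∀ t ∈ (Finset.univ.erase p).erase q, σ t = σ0 t) ↔ (σ = σ0 ∨ σ = τ) := by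
      constructor
      · intro h
        have hfix : ∀ t, t ≠ p → t ≠ q → (σ0⁻¹ * σ) t = t := by
          intro t h1 h2
          have := h t (by simp [h1, h2])
          simp [Equiv.Perm.mul_apply, this]
        rcases perm_eq_of_fixes hpq _ hfix with h' | h'
        · exact Or.inl (inv_mul_eq_one.mp h').symm
        · right
          rw [hτ, ← h', mul_inv_cancel_left]
      · rintro (rfl | rfl)
        · intro t _; rfl
        · intro t ht
          simp only [Finset.mem_erase] at ht
          simp [hτ, Equiv.Perm.mul_apply, Equiv.swap_apply_of_ne_of_ne ht.2.1 ht.1]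
    simp only [hiff]
    by_cases h1 : σ = σ0
    · subst h1
      simp [hστ.symm, hστ]
    · by_cases h2 : σ = τ
      · subst h2
        simp [h1, hτp, hτq]
      · simp [h1, h2]
  have hsum : ∀ s : Finset (Equiv.Perm (Fin n)),
      (∑ σ ∈ s, ∏ t, (Polynomial.X * Polynomial.C (D t (σ t)) + Polynomial.C (B t (σ t)))).coeff 2
        = (if σ0 ∈ s then D p (σ0 p) * D q (σ0 q) else 0)
          + (if τ ∈ s then D p (σ0 q) * D q (σ0 p) else 0) := by
    intro s
    rw [Polynomial.finset_sum_coeff]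
    rw [Finset.sum_congr rfl (fun σ _ => hc σ), Finset.sum_add_distrib,
      Finset.sum_ite_eq' s σ0 (fun _ => D p (σ0 p) * D q (σ0 q)),
      Finset.sum_ite_eq' s τ (fun _ => D p (σ0 q) * D q (σ0 p))]
  rw [gpoly, Polynomial.coeff_add, Polynomial.coeff_C_mul, Polynomial.coeff_C_mul, hsum, hsum]
  rcases Int.units_eq_one_or (Equiv.Perm.sign σ0) with h | h <;>
    simp [h, hsτ, Finset.mem_filter]

lemma exists_perm_pair (hn : 4 ≤ n) {p q k l : Fin n} (hpq : p ≠ q) (hkl : k ≠ l) :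
    ∃ σe σo : Equiv.Perm (Fin n), σe p = k ∧ σe q = l ∧ σo p = k ∧ σo q = l ∧
      Equiv.Perm.sign σe = 1 ∧ Equiv.Perm.sign σo = -1 := by
  classical
  set y : Fin n := Equiv.swap p k q with hy
  have hyk : y ≠ k := by
    intro h
    have : Equiv.swap p k q = Equiv.swap p k p := by
      rw [Equiv.swap_apply_left, ← hy, h]
    exact hpq ((Equiv.swap p k).injective this).symm
  set σb : Equiv.Perm (Fin n) := Equiv.swap y l * Equiv.swap p k with hσb
  have hσbp : σb p = k := by
    simp only [hσb, Equiv.Perm.mul_apply, Equiv.swap_apply_left]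
    exact Equiv.swap_apply_of_ne_of_ne (Ne.symm hyk) hkl
  have hσbq : σb q = l := by
    simp only [hσb, Equiv.Perm.mul_apply, ← hy, Equiv.swap_apply_left]
  -- two distinct points outside {p, q}
  obtain ⟨a, ha, b, hb, hab⟩ : ∃ a ∈ (Finset.univ : Finset (Fin n)) \ {p, q},
      ∃ b ∈ (Finset.univ : Finset (Fin n)) \ {p, q}, a ≠ b := by
    apply Finset.one_lt_card.mp
    have hcard : ({p, q} : Finset (Fin n)).card ≤ 2 := Finset.card_insert_le _ _ |>.trans (by simp)
    rw [Finset.card_sdiff_of_subset (Finset.subset_univ _)]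
    have : (Finset.univ : Finset (Fin n)).card = n := Finset.card_fin n
    omega
  have hap : a ≠ p := by
    simp only [Finset.mem_sdiff, Finset.mem_insert, Finset.mem_singleton] at ha
    exact fun h => ha.2 (Or.inl h)
  have haq : a ≠ q := by
    simp only [Finset.mem_sdiff, Finset.mem_insert, Finset.mem_singleton] at ha
    exact fun h => ha.2 (Or.inr h)
  have hbp : b ≠ p := by
    simp only [Finset.mem_sdiff, Finset.mem_insert, Finset.mem_singleton] at hb
    exact fun h => hb.2 (Or.inl h)
  have hbq : b ≠ q := by
    simp only [Finset.mem_sdiff, Finset.mem_insert, Finset.mem_singleton] at hb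
    exact fun h => hb.2 (Or.inr h)
  set σc : Equiv.Perm (Fin n) := σb * Equiv.swap a b with hσc
  have hσcp : σc p = k := by
    simp only [hσc, Equiv.Perm.mul_apply, Equiv.swap_apply_of_ne_of_ne (Ne.symm hap) (Ne.symm hbp)]
    exact hσbp
  have hσcq : σc q = l := by
    simp only [hσc, Equiv.Perm.mul_apply, Equiv.swap_apply_of_ne_of_ne (Ne.symm haq) (Ne.symm hbq)]
    exact hσbq
  have hsign : Equiv.Perm.sign σc = -Equiv.Perm.sign σb := by
    simp [hσc, Equiv.Perm.sign_swap hab, mul_comm]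
  rcases Int.units_eq_one_or (Equiv.Perm.sign σb) with h | h
  · exact ⟨σb, σc, hσbp, hσbq, hσcp, hσcq, h, by rw [hsign, h]⟩
  · exact ⟨σc, σb, hσcp, hσcq, hσbp, hσbq, by rw [hsign, h]; rfl, h⟩

end AuxPoly
section KeyLemma

variable {K : Type*} [Field K] [CharZero K] {n : ℕ}

lemma key_mul_eq_zero (hn : 4 ≤ n) (α β : K) (hαβ : α ≠ β) (hαβ' : α ≠ -β)
    (T : Matrix (Fin n) (Fin n) K ≃ₗ[K] Matrix (Fin n) (Fin n) K)
    (hT : ∀ A, gdet α β (T A) = gdet α β A)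
    (C : Matrix (Fin n) (Fin n) K) (hC : lineSupp C)
    {p q k l : Fin n} (hpq : p ≠ q) (hkl : k ≠ l) :
    T C p k * T C q l = 0 := by
  have hpoly : ∀ B, gpoly α β (T C) B = gpoly α β C (T.symm B) := by
    intro B
    apply Polynomial.funext
    intro x
    rw [gpoly_eval, gpoly_eval]
    have h : x • (T C) + B = T (x • C + T.symm B) := by
      rw [map_add, _root_.map_smul, T.apply_symm_apply]
    rw [h, hT]
  have hco : ∀ B, (gpoly α β (T C) B).coeff 2 = 0 := by
    intro B
    rw [hpoly B]
    exact Polynomial.coeff_eq_zero_of_natDegree_lt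
      (lt_of_le_of_lt (gpoly_natDegree_le α β C (T.symm B) hC) one_lt_two)
  obtain ⟨σe, σo, hep, heq, hop, hoq, hse, hso⟩ := exists_perm_pair hn hpq hkl
  have h1 := hco (Matrix.of fun t m => if t ≠ p ∧ t ≠ q ∧ m = σe t then (1:K) else 0)
  rw [gpoly_coeff_two α β (T C) hpq σe, hse] at h1
  have h2 := hco (Matrix.of fun t m => if t ≠ p ∧ t ≠ q ∧ m = σo t then (1:K) else 0)
  rw [gpoly_coeff_two α β (T C) hpq σo, hso] at h2
  rw [hep, heq] at h1
  rw [hop, hoq] at h2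
  have hne1 : (1 : ℤˣ) ≠ -1 := by decide
  simp only [if_true, if_neg hne1, if_neg (Ne.symm hne1), add_zero, zero_add] at h1 h2
  set a := T C p k * T C q l with ha
  set b := T C p l * T C q k with hb'
  have e1 : α * a + β * b = 0 := by rw [ha, hb']; linear_combination h1
  have e2 : α * b + β * a = 0 := by rw [ha, hb']; linear_combination h2
  have hsumne : α + β ≠ 0 := fun h => hαβ' (by linear_combination h)
  have hdiffne : α - β ≠ 0 := sub_ne_zero.mpr hαβ
  have f1 : a + b = 0 :=
    (mul_eq_zero.mp (show (α + β) * (a + b) = 0 by linear_combination e1 + e2)).resolve_left hsumne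
  have f2 : a - b = 0 :=
    (mul_eq_zero.mp (show (α - β) * (a - b) = 0 by linear_combination e1 - e2)).resolve_left hdiffne
  have : (2 : K) * a = 0 := by linear_combination f1 + f2
  have h2ne : (2 : K) ≠ 0 := two_ne_zero
  exact (mul_eq_zero.mp this).resolve_left h2ne

end KeyLemma
section Transpose

variable {K : Type*} [Field K] {n : ℕ}

lemma sum_perm_transpose (A : Matrix (Fin n) (Fin n) K) (ε : ℤˣ) :
    ∑ σ ∈ Finset.univ.filter (fun σ : Equiv.Perm (Fin n) => Equiv.Perm.sign σ = ε),
        ∏ i, Aᵀ i (σ i)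
      = ∑ σ ∈ Finset.univ.filter (fun σ : Equiv.Perm (Fin n) => Equiv.Perm.sign σ = ε),
        ∏ i, A i (σ i) := by
  refine Finset.sum_bij' (fun σ _ => σ⁻¹) (fun σ _ => σ⁻¹) ?_ ?_ ?_ ?_ ?_
  · intro σ hσ
    simp only [Finset.mem_filter, Finset.mem_univ, true_and] at hσ ⊢
    rw [Equiv.Perm.sign_inv]; exact hσ
  · intro σ hσ
    simp only [Finset.mem_filter, Finset.mem_univ, true_and] at hσ ⊢
    rw [Equiv.Perm.sign_inv]; exact hσ
  · intro σ _; simp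
  · intro σ _; simp
  · intro σ _
    have h := Equiv.prod_comp σ (fun i => A i (σ⁻¹ i))
    simp only [Equiv.Perm.inv_def, Equiv.symm_apply_apply] at h
    rw [Equiv.Perm.inv_def, ← h]
    exact Finset.prod_congr rfl fun t _ => by simp [Matrix.transpose_apply]

lemma gdet_transpose (α β : K) (A : Matrix (Fin n) (Fin n) K) :
    gdet α β Aᵀ = gdet α β A := by
  unfold gdet evenDet oddDet
  rw [sum_perm_transpose A 1, sum_perm_transpose A (-1)]

lemma stdBasis_row_supp (i j : Fin n) :
    ∀ t m : Fin n, Matrix.single i j (1:K) t m ≠ 0 → t = i := by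
  intro t m htm
  have hcond : i = t ∧ j = m := by
    by_contra hcond
    exact htm (by simp [Matrix.single, hcond])
  exact hcond.1.symm

lemma stdBasis_col_supp (i j : Fin n) :
    ∀ t m : Fin n, Matrix.single i j (1:K) t m ≠ 0 → m = j := by
  intro t m htm
  have hcond : i = t ∧ j = m := by
    by_contra hcond
    exact htm (by simp [Matrix.single, hcond])
  exact hcond.2.symm

end Transpose

section RowCase

variable {K : Type*} [Field K] [CharZero K] {n : ℕ}

lemma row_case (hn : 4 ≤ n) (α β : K) (hαβ : α ≠ β) (hαβ' : α ≠ -β)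
    (T : Matrix (Fin n) (Fin n) K ≃ₗ[K] Matrix (Fin n) (Fin n) K)
    (hT : ∀ A, gdet α β (T A) = gdet α β A)
    (i j r c1 c2 : Fin n) (hc : c1 ≠ c2)
    (hrow : ∀ s m, T (Matrix.single i j (1:K)) s m ≠ 0 → s = r)
    (h1 : T (Matrix.single i j (1:K)) r c1 ≠ 0)
    (h2 : T (Matrix.single i j (1:K)) r c2 ≠ 0) : False := by
  classical
  set D := T (Matrix.single i j (1:K)) with hD
  have hcand : ∃ E' : Matrix (Fin n) (Fin n) K, lineSupp E' ∧
      lineSupp (Matrix.single i j (1:K) + E') ∧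
      ∃ s m, s ≠ r ∧ T E' s m ≠ 0 := by
    by_contra hcon
    push_neg at hcon
    have hcolimg : ∀ k : Fin n, ∀ s m, s ≠ r → T (Matrix.single k j (1:K)) s m = 0 := by
      intro k s m hs
      refine hcon (Matrix.single k j (1:K)) (Or.inr ⟨j, stdBasis_col_supp k j⟩)
        (Or.inr ⟨j, ?_⟩) s m hs
      intro t u htu
      by_contra huj
      apply htu
      have e1 : Matrix.single i j (1:K) t u = 0 := by
        by_contra h'; exact huj (stdBasis_col_supp i j t u h')
      have e2 : Matrix.single k j (1:K) t u = 0 := by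
        by_contra h'; exact huj (stdBasis_col_supp k j t u h')
      simp [Matrix.add_apply, e1, e2]
    have hrowimg : ∀ l : Fin n, ∀ s m, s ≠ r → T (Matrix.single i l (1:K)) s m = 0 := by
      intro l s m hs
      refine hcon (Matrix.single i l (1:K)) (Or.inl ⟨i, stdBasis_row_supp i l⟩)
        (Or.inl ⟨i, ?_⟩) s m hs
      intro t u htu
      by_contra hti
      apply htu
      have e1 : Matrix.single i j (1:K) t u = 0 := by
        by_contra h'; exact hti (stdBasis_row_supp i j t u h')
      have e2 : Matrix.single i l (1:K) t u = 0 := by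
        by_contra h'; exact hti (stdBasis_row_supp i l t u h')
      simp [Matrix.add_apply, e1, e2]
    set colMat : (Fin n → K) → Matrix (Fin n) (Fin n) K :=
      fun v => Matrix.of fun t m => if m = j then v t else 0 with hcolMat
    have hdecomp : ∀ v, colMat v = ∑ k, v k • Matrix.single k j (1:K) := by
      intro v; ext t u
      simp only [hcolMat, Matrix.sum_apply, Matrix.smul_apply, Matrix.single,
        Matrix.of_apply, smul_eq_mul]
      by_cases h : u = j
      · subst h
        simp [Finset.sum_ite_eq]
      · rw [if_neg h]
        symm
        exact Finset.sum_eq_zero fun x _ => by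
          rw [if_neg (show ¬(x = t ∧ j = u) from fun hcc => h hcc.2.symm), mul_zero]
    have hallcol : ∀ v, ∀ s m, s ≠ r → T (colMat v) s m = 0 := by
      intro v s m hs
      rw [hdecomp, map_sum, Matrix.sum_apply]
      refine Finset.sum_eq_zero fun k _ => ?_
      rw [_root_.map_smul, Matrix.smul_apply, hcolimg k s m hs, smul_zero]
    have hcadd : ∀ u v, colMat (u + v) = colMat u + colMat v := by
      intro u v; ext t m; by_cases h : m = j <;> simp [hcolMat, h]
    have hcsmul : ∀ (c : K) v, colMat (c • v) = c • colMat v := by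
      intro c v; ext t m; by_cases h : m = j <;> simp [hcolMat, h]
    set sLin : (Fin n → K) →ₗ[K] (Fin n → K) :=
      { toFun := fun v m => T (colMat v) r m
        map_add' := fun u v => by
          funext m
          show T (colMat (u + v)) r m = T (colMat u) r m + T (colMat v) r m
          rw [hcadd, map_add]; rfl
        map_smul' := fun c v => by
          funext m
          show T (colMat (c • v)) r m = c * T (colMat v) r m
          rw [hcsmul, _root_.map_smul]; rfl } with hsLin
    have hsinj : Function.Injective sLin := by
      intro u v huv
      have h0 : T (colMat u) = T (colMat v) := by
        ext t m
        by_cases ht : t = r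
        · subst ht
          exact congrFun huv m
        · rw [hallcol u t m ht, hallcol v t m ht]
      have h3 := T.injective h0
      funext t
      have h4 := congrFun (congrFun h3 t) j
      simpa [hcolMat] using h4
    have hssurj : Function.Surjective sLin := (LinearMap.injective_iff_surjective).mp hsinj
    have : Nontrivial (Fin n) := Fin.nontrivial_iff_two_le.mpr (by omega)
    obtain ⟨l, hl⟩ := exists_ne j
    obtain ⟨v, hv⟩ := hssurj (fun m => T (Matrix.single i l (1:K)) r m)
    have heq : T (Matrix.single i l (1:K)) = T (colMat v) := by
      ext t m
      by_cases ht : t = r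
      · subst ht
        exact (congrFun hv m).symm
      · rw [hrowimg l t m ht, hallcol v t m ht]
    have hil := congrFun (congrFun (T.injective heq) i) l
    simp [Matrix.single, hcolMat, hl] at hil
  obtain ⟨E', hlE', hlsum, s0, m0, hs0, hTne⟩ := hcand
  have hP' : ∀ p q k l : Fin n, p ≠ q → k ≠ l → T E' p k * T E' q l = 0 :=
    fun p q k l hpq hkl => key_mul_eq_zero hn α β hαβ hαβ' T hT E' hlE' hpq hkl
  have hPsum : ∀ p q k l : Fin n, p ≠ q → k ≠ l →
      (D p k + T E' p k) * (D q l + T E' q l) = 0 := by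
    intro p q k l hpq hkl
    have h := key_mul_eq_zero hn α β hαβ hαβ' T hT _ hlsum hpq hkl
    rw [map_add] at h
    simpa [Matrix.add_apply, hD] using h
  set ct : Fin n := if c1 = m0 then c2 else c1 with hctdef
  have hct : D r ct ≠ 0 := by
    rw [hctdef]; split
    · exact h2
    · exact h1
  have hctm : ct ≠ m0 := by
    rw [hctdef]; split
    · rename_i h; rw [← h]; exact Ne.symm hc
    · rename_i h; exact h
  have hD's : T E' r ct = 0 := by
    have h := hP' r s0 ct m0 (Ne.symm hs0) hctm
    exact (mul_eq_zero.mp h).resolve_right hTne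
  have hDs : D s0 m0 = 0 := by
    by_contra h
    exact hs0 (hrow s0 m0 h)
  have hfin := hPsum r s0 ct m0 (Ne.symm hs0) hctm
  rw [hD's, add_zero, hDs, zero_add] at hfin
  exact (mul_ne_zero hct hTne) hfin

end RowCase
/-- for `n ≥ 4` and `α ≠ ±β`, if `T` stabilizes `det^{(α,β)}`, then each
`T(E_{ij})` has exactly one nonzero entry. -/
theorem image_of_matrix_unit_has_unique_nonzero_entry {K : Type*} [Field K] [CharZero K]
    {n : ℕ} (hn : 4 ≤ n) (α β : K) (hαβ : α ≠ β) (hαβ' : α ≠ -β)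
    (T : Matrix (Fin n) (Fin n) K ≃ₗ[K] Matrix (Fin n) (Fin n) K)
    (hT : ∀ A, gdet α β (T A) = gdet α β A) :
    ∀ i j : Fin n, ∃! p : Fin n × Fin n, T (Matrix.single i j (1 : K)) p.1 p.2 ≠ 0 := by
  intro i j
  classical
  set D := T (Matrix.single i j (1:K)) with hD
  have hline : lineSupp (Matrix.single i j (1:K)) := Or.inl ⟨i, stdBasis_row_supp i j⟩
  have hPD : ∀ p q k l : Fin n, p ≠ q → k ≠ l → D p k * D q l = 0 :=
    fun p q k l hpq hkl => key_mul_eq_zero hn α β hαβ hαβ' T hT _ hline hpq hkl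
  have hDne : D ≠ 0 := by
    intro h
    have h0 : Matrix.single i j (1:K) = 0 := T.injective (by rw [← hD, h, map_zero])
    have h1 := congrFun (congrFun h0 i) j
    simp [Matrix.single_apply_same] at h1
  obtain ⟨r, c, hrc⟩ : ∃ r c, D r c ≠ 0 := by
    by_contra h
    push_neg at h
    exact hDne (by ext t m; simp [h])
  refine ⟨(r, c), hrc, ?_⟩
  rintro ⟨s, m⟩ hsm
  simp only at hsm
  by_contra hne
  have hcase : (s = r ∧ m ≠ c) ∨ (s ≠ r ∧ m = c) := by
    rcases ne_or_eq s r with hs | hs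
    · rcases ne_or_eq m c with hm | hm
      · exact absurd (hPD s r m c hs hm) (mul_ne_zero hsm hrc)
      · exact Or.inr ⟨hs, hm⟩
    · rcases ne_or_eq m c with hm | hm
      · exact Or.inl ⟨hs, hm⟩
      · exact absurd (Prod.ext hs hm : (s, m) = (r, c)) hne
  rcases hcase with ⟨hs, hm⟩ | ⟨hs, hm⟩
  · -- two nonzero entries in row r : columns m and c
    have hDrm : D r m ≠ 0 := hs ▸ hsm
    have hrowsupp : ∀ t u : Fin n, D t u ≠ 0 → t = r := by
      intro t u htu
      by_contra htr
      by_cases hu : u = c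
      · subst hu
        exact absurd (hPD t r u m htr (fun h => hm h.symm)) (mul_ne_zero htu hDrm)
      · exact absurd (hPD t r u c htr hu) (mul_ne_zero htu hrc)
    exact row_case hn α β hαβ hαβ' T hT i j r m c hm hrowsupp hDrm hrc
  · -- two nonzero entries in column c : rows s and r
    have hDsc : D s c ≠ 0 := hm ▸ hsm
    have hcolsupp : ∀ t u : Fin n, D t u ≠ 0 → u = c := by
      intro t u htu
      by_contra huc
      by_cases ht : t = r
      · subst ht
        exact absurd (hPD t s u c (Ne.symm hs) huc) (mul_ne_zero htu hDsc)
      · exact absurd (hPD t r u c ht huc) (mul_ne_zero htu hrc)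
    -- transpose the problem
    set Tt : Matrix (Fin n) (Fin n) K ≃ₗ[K] Matrix (Fin n) (Fin n) K :=
      (Matrix.transposeLinearEquiv (Fin n) (Fin n) K K).trans
        (T.trans (Matrix.transposeLinearEquiv (Fin n) (Fin n) K K)) with hTt
    have hTt' : ∀ A, gdet α β (Tt A) = gdet α β A := by
      intro A
      have hA : Tt A = (T Aᵀ)ᵀ := rfl
      rw [hA, gdet_transpose, hT, gdet_transpose]
    have himg : Tt (Matrix.single j i (1:K)) = Dᵀ := by
      have h1t : (Matrix.single j i (1:K))ᵀ = Matrix.single i j (1:K) := by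
        ext t u
        simp [Matrix.transpose_apply, Matrix.single, and_comm]
      show (T ((Matrix.single j i (1:K))ᵀ))ᵀ = Dᵀ
      rw [h1t, hD]
    refine row_case hn α β hαβ hαβ' Tt hTt' j i c r s (Ne.symm hs) ?_ ?_ ?_
    · intro t u htu
      rw [himg] at htu
      exact hcolsupp u t htu
    · rw [himg]
      exact hrc
    · rw [himg]
      exact hDsc
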